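/- arXiv:0812.2553 — 2 statements merged into one kernel-verified Lean document; each statement's English description precedes it below -/
import Mathlib

section
/- (Theorem 9: reciprocity law for Dedekind-type DC sums) Let h and k be coprime odd positive integers and let p ≥ 1 be an odd integer. Then k^p T_p(h, k) + h^p T_p(k, h) = Σ_{s=0}^{p} C(p,s) h^s k^{p−s} E_s E_{p−s} − 2 E_p, where E_s denotes the s-th Euler number. -/
open Finset

/-- The Euler numbers `E_n`, defined by `E_0 = 1` and the recurrence
`∑_{l=0}^{n} C(n,l) E_l + E_n = 0` for `n ≥ 1`. -/
def eulerNumber : ℕ → ℚ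
  | 0 => 1
  | n + 1 => -(∑ l : Fin (n + 1), ((n + 1).choose l : ℚ) * eulerNumber l) / 2

/-- The Euler polynomials `E_n(x) = ∑_{l=0}^{n} C(n,l) E_l x^{n-l}`. -/
noncomputable def eulerPoly (n : ℕ) (x : ℝ) : ℝ :=
  ∑ l ∈ Finset.range (n + 1), (n.choose l : ℝ) * (eulerNumber l : ℝ) * x ^ (n - l)

/-- The Euler function `Ē_p(x) = (-1)^⌊x⌋ E_p(x - ⌊x⌋)`. -/
noncomputable def eulerFun (p : ℕ) (x : ℝ) : ℝ := (-1 : ℝ) ^ ⌊x⌋ * eulerPoly p (x - ⌊x⌋)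

/-- The Dedekind-type DC sum `T_p(h,k) = 2 ∑_{u=1}^{k-1} (-1)^{u-1} (u/k) Ē_p(hu/k)`. -/
noncomputable def dcSum (p h k : ℕ) : ℝ :=
  2 * ∑ u ∈ Finset.Ico 1 k, (-1 : ℝ) ^ (u - 1) * ((u : ℝ) / k) * eulerFun p (h * u / k)



lemma neg_one_pow_congr' {a b : ℕ} (hab : a % 2 = b % 2) : ((-1 : ℝ)) ^ a = (-1) ^ b := by
  conv_lhs => rw [← Nat.div_add_mod a 2]
  conv_rhs => rw [← Nat.div_add_mod b 2]
  rw [hab, pow_add, pow_add, pow_mul, pow_mul]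
  norm_num

lemma euler_rec (n : ℕ) (hn : 1 ≤ n) :
    ∑ l ∈ Finset.range (n + 1), (n.choose l : ℝ) * (eulerNumber l : ℝ) = -(eulerNumber n : ℝ) := by
  obtain ⟨m, rfl⟩ := Nat.exists_eq_add_of_le hn
  have hq : ∑ l ∈ Finset.range (1 + m + 1), ((1 + m).choose l : ℚ) * eulerNumber l
      = -eulerNumber (1 + m) := by
    have hdef : eulerNumber (m + 1)
        = -(∑ l ∈ Finset.range (m + 1), ((m + 1).choose l : ℚ) * eulerNumber l) / 2 := by
      rw [eulerNumber]
      rw [Fin.sum_univ_eq_sum_range (fun l => ((m + 1).choose l : ℚ) * eulerNumber l) (m + 1)]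
    have h1m : 1 + m = m + 1 := by ring
    rw [h1m, Finset.sum_range_succ, Nat.choose_self]
    rw [hdef]
    ring
  calc ∑ l ∈ Finset.range (1 + m + 1), ((1 + m).choose l : ℝ) * (eulerNumber l : ℝ)
      = ((∑ l ∈ Finset.range (1 + m + 1), ((1 + m).choose l : ℚ) * eulerNumber l : ℚ) : ℝ) := by
        push_cast; ring
    _ = -(eulerNumber (1 + m) : ℝ) := by rw [hq]; push_cast; ring

lemma eulerPoly_zero (n : ℕ) : eulerPoly n 0 = (eulerNumber n : ℝ) := by
  unfold eulerPoly
  rw [Finset.sum_range_succ]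
  simp only [Nat.choose_self, Nat.sub_self, pow_zero, Nat.cast_one, one_mul, mul_one]
  rw [Finset.sum_eq_zero, zero_add]
  intro l hl
  rw [zero_pow, mul_zero]
  simp only [Finset.mem_range] at hl
  omega

lemma eulerPoly_reflect (n : ℕ) (x : ℝ) :
    eulerPoly n x = ∑ i ∈ Finset.range (n + 1), (n.choose i : ℝ) * (eulerNumber (n - i) : ℝ) * x ^ i := by
  unfold eulerPoly
  rw [← Finset.sum_range_reflect]
  apply Finset.sum_congr rfl
  intro i hi
  simp only [Finset.mem_range] at hi
  have hi' : i ≤ n := by omega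
  have h1 : n + 1 - 1 - i = n - i := by omega
  rw [h1, Nat.choose_symm hi', Nat.sub_sub_self hi']

lemma eulerFun_add_one (p : ℕ) (x : ℝ) : eulerFun p (x + 1) = -eulerFun p x := by
  unfold eulerFun
  rw [Int.floor_add_one, zpow_add_one₀ (by norm_num : (-1:ℝ) ≠ 0)]
  push_cast
  ring_nf

lemma eulerFun_add_nat (p : ℕ) (x : ℝ) (n : ℕ) :
    eulerFun p (x + n) = (-1 : ℝ) ^ n * eulerFun p x := by
  induction n with
  | zero => simp
  | succ m ih =>
    have : x + (m + 1 : ℕ) = (x + m) + 1 := by push_cast; ring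
    rw [this, eulerFun_add_one, ih, pow_succ]
    ring

lemma eulerFun_of_Ico (p : ℕ) (x : ℝ) (h0 : 0 ≤ x) (h1 : x < 1) :
    eulerFun p x = eulerPoly p x := by
  unfold eulerFun
  have : ⌊x⌋ = 0 := Int.floor_eq_zero_iff.mpr ⟨h0, h1⟩
  rw [this]
  norm_num

lemma eulerFun_zero (p : ℕ) : eulerFun p 0 = (eulerNumber p : ℝ) := by
  rw [eulerFun_of_Ico p 0 le_rfl one_pos, eulerPoly_zero]

-- T1
lemma eulerPoly_add_one (n : ℕ) (x : ℝ) :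
    eulerPoly n (x + 1) + eulerPoly n x = 2 * x ^ n := by
  rcases Nat.eq_zero_or_pos n with h0 | hn
  · subst h0; simp [eulerPoly, eulerNumber]; norm_num
  have expand : eulerPoly n (x + 1)
      = ∑ l ∈ Finset.range (n + 1), ∑ i ∈ Finset.range (n + 1),
          (n.choose l : ℝ) * (eulerNumber l : ℝ) * (((n - l).choose i : ℝ) * x ^ i) := by
    unfold eulerPoly
    apply Finset.sum_congr rfl
    intro l hl
    simp only [Finset.mem_range] at hl
    rw [add_pow]
    rw [Finset.mul_sum]
    rw [← Finset.sum_subset (Finset.range_subset_range.mpr (by omega : n - l + 1 ≤ n + 1))]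
    · apply Finset.sum_congr rfl
      intro i hi
      simp only [one_pow, mul_one]
      ring
    · intro i hi hni
      simp only [Finset.mem_range] at hi hni
      rw [Nat.choose_eq_zero_of_lt (show n - l < i by omega)]
      simp
  rw [expand, Finset.sum_comm]
  have inner : ∀ i ∈ Finset.range (n + 1),
      ∑ l ∈ Finset.range (n + 1),
          (n.choose l : ℝ) * (eulerNumber l : ℝ) * (((n - l).choose i : ℝ) * x ^ i)
        = -((n.choose i : ℝ) * (eulerNumber (n - i) : ℝ) * x ^ i)
            + (if i = n then 2 * x ^ n else 0) := by
    intro i hi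
    simp only [Finset.mem_range] at hi
    have hshrink : ∑ l ∈ Finset.range (n + 1),
        (n.choose l : ℝ) * (eulerNumber l : ℝ) * (((n - l).choose i : ℝ) * x ^ i)
        = ∑ l ∈ Finset.range (n - i + 1),
            (n.choose l : ℝ) * (eulerNumber l : ℝ) * (((n - l).choose i : ℝ) * x ^ i) := by
      rw [← Finset.sum_subset (Finset.range_subset_range.mpr (by omega : n - i + 1 ≤ n + 1))]
      intro l hl hnl
      simp only [Finset.mem_range] at hl hnl
      rw [Nat.choose_eq_zero_of_lt (show n - l < i by omega)]
      simp
    have hkey : ∀ l ∈ Finset.range (n - i + 1),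
        (n.choose l : ℝ) * ((n - l).choose i : ℝ) = (n.choose i : ℝ) * ((n - i).choose l : ℝ) := by
      intro l hl
      simp only [Finset.mem_range] at hl
      have h1 : l + i ≤ n := by omega
      have e1 : (n.choose (l + i)) * ((l + i).choose l) = n.choose l * ((n - l).choose i) := by
        have := Nat.choose_mul (n := n) (show l ≤ l + i by omega)
        simpa [Nat.add_sub_cancel_left] using this
      have e2 : (n.choose (l + i)) * ((l + i).choose i) = n.choose i * ((n - i).choose l) := by
        have := Nat.choose_mul (n := n) (show i ≤ l + i by omega)
        simpa [Nat.add_sub_cancel] using this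
      have e3 : (l + i).choose l = (l + i).choose i := Nat.choose_symm_add
      have : n.choose l * ((n - l).choose i) = n.choose i * ((n - i).choose l) := by
        rw [← e1, e3, e2]
      exact_mod_cast congrArg (fun t : ℕ => (t : ℝ)) this
    rw [hshrink]
    have hsum : ∑ l ∈ Finset.range (n - i + 1),
        (n.choose l : ℝ) * (eulerNumber l : ℝ) * (((n - l).choose i : ℝ) * x ^ i)
        = (n.choose i : ℝ) * x ^ i *
            ∑ l ∈ Finset.range (n - i + 1), ((n - i).choose l : ℝ) * (eulerNumber l : ℝ) := by
      rw [Finset.mul_sum]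
      apply Finset.sum_congr rfl
      intro l hl
      have h := hkey l hl
      linear_combination (eulerNumber l : ℝ) * x ^ i * h
    rw [hsum]
    by_cases hin : i = n
    · subst hin
      simp only [if_pos rfl, Nat.sub_self]
      rw [show Finset.range (0 + 1) = {0} from rfl]
      simp only [Finset.sum_singleton, Nat.choose_self, Nat.choose_zero_right, Nat.cast_one]
      have he0 : (eulerNumber 0 : ℝ) = 1 := by norm_num [eulerNumber]
      rw [he0, if_pos trivial]
      ring
    · rw [if_neg hin]
      rw [euler_rec (n - i) (by omega)]
      ring
  rw [Finset.sum_congr rfl inner]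
  rw [Finset.sum_add_distrib, Finset.sum_ite_eq' (Finset.range (n + 1)) n (fun _ => 2 * x ^ n)]
  rw [if_pos (by simp : n ∈ Finset.range (n + 1))]
  rw [Finset.sum_neg_distrib, ← eulerPoly_reflect]
  ring

-- T2
lemma eulerPoly_add_nat (n T : ℕ) (x : ℝ) :
    (-1 : ℝ) ^ T * eulerPoly n (x + T) =
      eulerPoly n x - 2 * ∑ t ∈ Finset.range T, (-1 : ℝ) ^ t * (x + t) ^ n := by
  induction T with
  | zero => simp
  | succ m ih =>
    rw [Finset.sum_range_succ]
    have harg : x + ((m + 1 : ℕ) : ℝ) = (x + m) + 1 := by push_cast; ring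
    have h1 := eulerPoly_add_one n (x + m)
    rw [harg, pow_succ]
    have : eulerPoly n (x + m + 1) = 2 * (x + m) ^ n - eulerPoly n (x + m) := by linarith
    rw [this]
    rw [mul_sub] at *
    nlinarith [ih]

noncomputable def EP (n : ℕ) : Polynomial ℝ :=
  ∑ l ∈ Finset.range (n + 1), Polynomial.C ((n.choose l : ℝ) * (eulerNumber l : ℝ)) * Polynomial.X ^ (n - l)

lemma EP_eval (n : ℕ) (x : ℝ) : (EP n).eval x = eulerPoly n x := by
  unfold EP eulerPoly
  rw [Polynomial.eval_finset_sum]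
  apply Finset.sum_congr rfl
  intro l _
  simp [mul_assoc]

lemma poly_antiperiodic_zero (P : Polynomial ℝ) (c : ℝ) (hc : c ≠ 0)
    (hP : ∀ x, P.eval (x + c) = -P.eval x) : ∀ x, P.eval x = 0 := by
  have per : ∀ x, P.eval (x + 2 * c) = P.eval x := by
    intro x
    have h1 := hP (x + c)
    have h2 := hP x
    rw [show x + c + c = x + 2 * c by ring] at h1
    rw [h1, h2, neg_neg]
  have vals : ∀ m : ℕ, P.eval ((m : ℝ) * (2 * c)) = P.eval 0 := by
    intro m
    induction m with
    | zero => simp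
    | succ j ih =>
      have : ((j + 1 : ℕ) : ℝ) * (2 * c) = (j : ℝ) * (2 * c) + 2 * c := by push_cast; ring
      rw [this, per, ih]
  have hconst : P = Polynomial.C (P.eval 0) := by
    have hzero : P - Polynomial.C (P.eval 0) = 0 := by
      apply Polynomial.eq_zero_of_infinite_isRoot
      apply Set.Infinite.mono (s := Set.range (fun m : ℕ => (m : ℝ) * (2 * c)))
      · rintro y ⟨m, rfl⟩
        simp only [Set.mem_setOf_eq, Polynomial.IsRoot, Polynomial.eval_sub, Polynomial.eval_C]
        rw [vals m]; ring
      · apply Set.infinite_range_of_injective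
        intro a b hab
        simp only at hab
        have h2c : (2 : ℝ) * c ≠ 0 := by
          intro h; apply hc; linarith
        have := mul_right_cancel₀ h2c hab
        exact_mod_cast this
    have : P - Polynomial.C (P.eval 0) + Polynomial.C (P.eval 0) = Polynomial.C (P.eval 0) := by
      rw [hzero]; ring
    simpa using this
  intro x
  have h0 : P.eval 0 = 0 := by
    have := hP (-c)
    rw [hconst] at this ⊢
    simp at this ⊢
    linarith
  rw [hconst, h0]
  simp

lemma eulerPoly_one_sub (n : ℕ) (x : ℝ) :
    eulerPoly n (1 - x) = (-1 : ℝ) ^ n * eulerPoly n x := by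
  set P : Polynomial ℝ :=
    (EP n).comp (Polynomial.C 1 - Polynomial.X) - Polynomial.C ((-1 : ℝ) ^ n) * EP n with hPdef
  have hev : ∀ y : ℝ, P.eval y = eulerPoly n (1 - y) - (-1 : ℝ) ^ n * eulerPoly n y := by
    intro y
    simp [hPdef, Polynomial.eval_comp, EP_eval]
  have hanti : ∀ y : ℝ, P.eval (y + 1) = -P.eval y := by
    intro y
    rw [hev, hev]
    have h1 : eulerPoly n (1 - (y + 1)) = 2 * (-y) ^ n - eulerPoly n (1 - y) := by
      have := eulerPoly_add_one n (-y)
      have harg : (-y) + 1 = 1 - y := by ring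
      rw [harg] at this
      have harg2 : 1 - (y + 1) = -y := by ring
      rw [harg2]
      linarith
    have h2 : eulerPoly n (y + 1) = 2 * y ^ n - eulerPoly n y := by
      have := eulerPoly_add_one n y
      linarith
    rw [h1, h2]
    have : (-y) ^ n = (-1 : ℝ) ^ n * y ^ n := by
      rw [neg_pow]
    rw [this]
    ring
  have := poly_antiperiodic_zero P 1 one_ne_zero hanti x
  rw [hev] at this
  linarith

lemma eulerNumber_even_zero (n : ℕ) (h2 : 2 ≤ n) (he : Even n) : (eulerNumber n : ℝ) = 0 := by
  have h1 := eulerPoly_add_one n 0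
  have hsym := eulerPoly_one_sub n 0
  rw [Even.neg_one_pow he, one_mul] at hsym
  rw [zero_add] at h1
  rw [show (1:ℝ) - 0 = 1 by ring] at hsym
  rw [hsym] at h1
  rw [zero_pow (by omega : n ≠ 0)] at h1
  rw [eulerPoly_zero] at h1
  linarith

lemma eulerPoly_raabe (m n : ℕ) (hm : Odd m) (x : ℝ) :
    (m : ℝ) ^ n * ∑ j ∈ Finset.range m, (-1 : ℝ) ^ j * eulerPoly n ((x + j) / m) = eulerPoly n x := by
  have hm0 : 0 < m := hm.pos
  have hmR : (m : ℝ) ≠ 0 := by positivity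
  set P : Polynomial ℝ :=
    Polynomial.C ((m : ℝ) ^ n) *
        ∑ j ∈ Finset.range m, Polynomial.C ((-1 : ℝ) ^ j) *
          (EP n).comp (Polynomial.C ((m : ℝ)⁻¹) * (Polynomial.X + Polynomial.C (j : ℝ)))
      - EP n with hPdef
  have hev : ∀ y : ℝ, P.eval y =
      (m : ℝ) ^ n * (∑ j ∈ Finset.range m, (-1 : ℝ) ^ j * eulerPoly n ((y + j) / m))
        - eulerPoly n y := by
    intro y
    simp only [hPdef, Polynomial.eval_sub, Polynomial.eval_mul, Polynomial.eval_C,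
      Polynomial.eval_finset_sum, Polynomial.eval_comp, Polynomial.eval_add, Polynomial.eval_X,
      EP_eval]
    congr 1
    apply congrArg
    apply Finset.sum_congr rfl
    intro j _
    rw [div_eq_inv_mul]
  have hanti : ∀ y : ℝ, P.eval (y + m) = -P.eval y := by
    intro y
    rw [hev, hev]
    have hsum : ∀ j : ℕ, (y + (m : ℝ) + j) / m = (y + j) / m + 1 := by
      intro j
      field_simp
      ring
    have hstep : (∑ j ∈ Finset.range m, (-1 : ℝ) ^ j * eulerPoly n ((y + (m : ℝ) + j) / m))
        = ∑ j ∈ Finset.range m, (-1 : ℝ) ^ j * (2 * ((y + j) / m) ^ n - eulerPoly n ((y + j) / m)) := by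
      apply Finset.sum_congr rfl
      intro j _
      rw [hsum j]
      have := eulerPoly_add_one n ((y + j) / m)
      have : eulerPoly n ((y + j) / m + 1) = 2 * ((y + j) / m) ^ n - eulerPoly n ((y + j) / m) := by
        linarith
      rw [this]
    rw [hstep]
    have hT2 := eulerPoly_add_nat n m y
    rw [Odd.neg_one_pow hm] at hT2
    have hpow : ∀ j : ℕ, (m : ℝ) ^ n * ((y + j) / m) ^ n = (y + j) ^ n := by
      intro j
      rw [div_pow, mul_div_cancel₀]
      positivity
    have hexp : (m : ℝ) ^ n * (∑ j ∈ Finset.range m, (-1 : ℝ) ^ j *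
          (2 * ((y + j) / m) ^ n - eulerPoly n ((y + j) / m)))
        = 2 * (∑ j ∈ Finset.range m, (-1 : ℝ) ^ j * (y + j) ^ n)
          - (m : ℝ) ^ n * (∑ j ∈ Finset.range m, (-1 : ℝ) ^ j * eulerPoly n ((y + j) / m)) := by
      rw [Finset.mul_sum, Finset.mul_sum, Finset.mul_sum, ← Finset.sum_sub_distrib]
      apply Finset.sum_congr rfl
      intro j _
      linear_combination ((-1:ℝ)^j * 2) * hpow j
    rw [hexp]
    -- hT2 : -eulerPoly n (y + m) = eulerPoly n y - 2 * ∑ ...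
    linarith [hT2]
  have := poly_antiperiodic_zero P m (by positivity) hanti x
  rw [hev] at this
  linarith

lemma eulerFun_one_sub (p : ℕ) (hp : Odd p) (x : ℝ) (h0 : 0 ≤ x) (h1 : x < 1) :
    eulerFun p (1 - x) = -eulerFun p x := by
  rcases eq_or_lt_of_le h0 with h | hpos
  · subst h
    rw [show (1:ℝ) - 0 = 0 + 1 by ring, eulerFun_add_one]
  · rw [eulerFun_of_Ico p (1 - x) (by linarith) (by linarith)]
    rw [eulerFun_of_Ico p x h0 h1]
    rw [eulerPoly_one_sub, Odd.neg_one_pow hp]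
    ring

lemma eulerFun_two_sub (p : ℕ) (hp : Odd p) (x : ℝ) (h0 : 0 ≤ x) (h2 : x < 2) :
    eulerFun p (2 - x) = eulerFun p x := by
  rcases lt_or_ge x 1 with h1 | h1
  · rw [show (2:ℝ) - x = (1 - x) + 1 by ring, eulerFun_add_one]
    rw [eulerFun_one_sub p hp x h0 h1]
    ring
  · have hy0 : 0 ≤ x - 1 := by linarith
    have hy1 : x - 1 < 1 := by linarith
    rw [show (2:ℝ) - x = 1 - (x - 1) by ring, eulerFun_one_sub p hp (x - 1) hy0 hy1]
    rw [show x = (x - 1) + 1 by ring, eulerFun_add_one]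
    ring_nf

lemma eulerFun_raabe (p m : ℕ) (hm : Odd m) (x : ℝ) (hx : 0 ≤ x) :
    (m : ℝ) ^ p * ∑ v ∈ Finset.range m, (-1 : ℝ) ^ v * eulerFun p (x + v / m) = eulerFun p (m * x) := by
  have hm0 : 0 < m := hm.pos
  have hmR : (0:ℝ) < m := by exact_mod_cast hm0
  set F : ℝ → ℝ := fun y =>
    (m : ℝ) ^ p * ∑ v ∈ Finset.range m, (-1 : ℝ) ^ v * eulerFun p (y + v / m) - eulerFun p (m * y)
    with hF
  have hstep : ∀ y : ℝ, F (y + 1 / m) = -F y := by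
    intro y
    have hsum : ∑ v ∈ Finset.range m, (-1 : ℝ) ^ v * eulerFun p (y + 1 / m + v / m)
        = -∑ v ∈ Finset.range m, (-1 : ℝ) ^ v * eulerFun p (y + v / m) := by
      have h1 : ∀ v : ℕ, y + 1 / m + (v : ℝ) / m = y + ((v + 1 : ℕ) : ℝ) / m := by
        intro v; push_cast; ring
      calc ∑ v ∈ Finset.range m, (-1 : ℝ) ^ v * eulerFun p (y + 1 / m + v / m)
          = ∑ v ∈ Finset.range m, -((-1 : ℝ) ^ (v + 1) * eulerFun p (y + ((v + 1 : ℕ) : ℝ) / m)) := by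
            apply Finset.sum_congr rfl
            intro v _
            rw [h1 v, pow_succ]
            ring
        _ = -∑ v ∈ Finset.range m, (-1 : ℝ) ^ (v + 1) * eulerFun p (y + ((v + 1 : ℕ) : ℝ) / m) := by
            rw [Finset.sum_neg_distrib]
        _ = -∑ w ∈ Finset.Ico 1 (m + 1), (-1 : ℝ) ^ w * eulerFun p (y + (w : ℝ) / m) := by
            congr 1
            rw [Finset.sum_Ico_eq_sum_range]
            simp only [Nat.add_sub_cancel]
            apply Finset.sum_congr rfl
            intro v _
            rw [add_comm 1 v]
        _ = -∑ v ∈ Finset.range m, (-1 : ℝ) ^ v * eulerFun p (y + v / m) := by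
            congr 1
            have hmem : ∑ w ∈ Finset.Ico 1 (m + 1), (-1 : ℝ) ^ w * eulerFun p (y + (w : ℝ) / m)
                = (∑ w ∈ Finset.Ico 0 (m + 1), (-1 : ℝ) ^ w * eulerFun p (y + (w : ℝ) / m))
                  - (-1 : ℝ) ^ 0 * eulerFun p (y + (0 : ℝ) / m) := by
              rw [Finset.sum_eq_sum_Ico_succ_bot (by omega : 0 < m + 1)]
              push_cast
              ring
            rw [hmem]
            rw [show Finset.Ico 0 (m + 1) = Finset.range (m + 1) by rw [Finset.range_eq_Ico]]
            rw [Finset.sum_range_succ]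
            have hlast : (-1 : ℝ) ^ m * eulerFun p (y + (m : ℝ) / m) = eulerFun p y := by
              rw [div_self (ne_of_gt hmR), Odd.neg_one_pow hm, eulerFun_add_one]
              ring
            rw [hlast]
            simp
    have harg : (m : ℝ) * (y + 1 / m) = m * y + 1 := by field_simp
    rw [hF]
    simp only
    rw [hsum, harg, eulerFun_add_one]
    ring
  have hbase : ∀ y : ℝ, 0 ≤ y → y < 1 / m → F y = 0 := by
    intro y hy0 hy1
    rw [hF]
    simp only
    have hmy1 : (m : ℝ) * y < 1 := by
      have := mul_lt_mul_of_pos_left hy1 hmR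
      rwa [mul_one_div, div_self (ne_of_gt hmR)] at this
    have hpts : ∀ v ∈ Finset.range m, (-1 : ℝ) ^ v * eulerFun p (y + v / m)
        = (-1 : ℝ) ^ v * eulerPoly p ((m * y + v) / m) := by
      intro v hv
      simp only [Finset.mem_range] at hv
      have hvle : (v : ℝ) ≤ (m : ℝ) - 1 := by
        have h' : (v : ℝ) + 1 ≤ (m : ℝ) := by exact_mod_cast hv
        linarith
      have hb0 : 0 ≤ y + (v : ℝ) / m := by positivity
      have hb1 : y + (v : ℝ) / m < 1 := by
        have hd : (v : ℝ) / m ≤ ((m : ℝ) - 1) / m := by gcongr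
        have he : (1 : ℝ) / m + ((m : ℝ) - 1) / m = 1 := by field_simp; ring
        linarith
      rw [eulerFun_of_Ico p _ hb0 hb1]
      have harg : y + (v : ℝ) / m = ((m : ℝ) * y + v) / m := by field_simp
      rw [harg]
    rw [Finset.sum_congr rfl hpts]
    rw [eulerFun_of_Ico p ((m : ℝ) * y) (by positivity) hmy1]
    rw [← eulerPoly_raabe m p hm ((m : ℝ) * y)]
    ring
  have hext : ∀ (M : ℕ) (y : ℝ), 0 ≤ y → y < 1 / m → F (y + M / m) = 0 := by
    intro M
    induction M with
    | zero => intro y h0 h1; simpa using hbase y h0 h1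
    | succ j ih =>
      intro y h0 h1
      have harg : y + ((j + 1 : ℕ) : ℝ) / m = (y + (j : ℕ) / m) + 1 / m := by push_cast; ring
      rw [harg, hstep, ih y h0 h1]
      ring
  have hf0 : (0 : ℤ) ≤ ⌊(m : ℝ) * x⌋ := Int.floor_nonneg.mpr (by positivity)
  set M : ℕ := ⌊(m : ℝ) * x⌋.toNat with hM
  have hMc : ((M : ℕ) : ℝ) = ((⌊(m : ℝ) * x⌋ : ℤ) : ℝ) := by
    rw [hM]; exact_mod_cast congrArg (fun z : ℤ => (z : ℝ)) (Int.toNat_of_nonneg hf0)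
  have hfl : ((⌊(m : ℝ) * x⌋ : ℤ) : ℝ) ≤ (m : ℝ) * x := Int.floor_le _
  have hfu : (m : ℝ) * x < ((⌊(m : ℝ) * x⌋ : ℤ) : ℝ) + 1 := Int.lt_floor_add_one _
  have hy0 : 0 ≤ x - (M : ℝ) / m := by
    rw [sub_nonneg, div_le_iff₀ hmR]
    rw [hMc]
    linarith
  have hy1 : x - (M : ℝ) / m < 1 / m := by
    rw [sub_lt_iff_lt_add, ← add_div, lt_div_iff₀ hmR]
    rw [hMc]
    linarith
  have hFx : F x = 0 := by
    rw [show x = (x - (M : ℝ) / m) + (M : ℝ) / m by ring]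
    exact hext M _ hy0 hy1
  rw [hF] at hFx
  simp only at hFx
  linarith

lemma sum_Ico_eulerFun (p m : ℕ) (hm : Odd m) (x : ℝ) (hx : 0 ≤ x) :
    (m : ℝ) ^ p * ∑ v ∈ Finset.Ico 1 m, (-1 : ℝ) ^ v * eulerFun p (x + v / m) =
      eulerFun p (m * x) - (m : ℝ) ^ p * eulerFun p x := by
  have hm0 : 0 < m := hm.pos
  have hsplit : ∑ v ∈ Finset.range m, (-1 : ℝ) ^ v * eulerFun p (x + v / m)
      = eulerFun p x + ∑ v ∈ Finset.Ico 1 m, (-1 : ℝ) ^ v * eulerFun p (x + v / m) := by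
    rw [Finset.range_eq_Ico, Finset.sum_eq_sum_Ico_succ_bot hm0]
    norm_num
  have := eulerFun_raabe p m hm x hx
  rw [hsplit] at this
  rw [mul_add] at this
  linarith

-- pointwise transform for the bijection
lemma eulerFun_mod_transform (p h k : ℕ) (hk0 : 0 < k) (hhodd : Odd h) (hkodd : Odd k) (u : ℕ) :
    (-1 : ℝ) ^ u * eulerFun p ((h : ℝ) * u / k)
      = (-1 : ℝ) ^ (h * u % k) * eulerFun p (((h * u % k : ℕ) : ℝ) / k) := by
  set q := h * u / k with hq
  set r := h * u % k with hr
  have hdm : k * q + r = h * u := Nat.div_add_mod (h * u) k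
  have hrk : r < k := Nat.mod_lt _ hk0
  have harg : (h : ℝ) * u / k = ((r : ℕ) : ℝ) / k + (q : ℕ) := by
    have : ((h * u : ℕ) : ℝ) = (k : ℝ) * q + r := by exact_mod_cast congrArg (fun t : ℕ => (t : ℝ)) hdm.symm
    push_cast at this ⊢
    field_simp
    linarith [this]
  rw [harg, eulerFun_add_nat]
  have hr01 : (0 : ℝ) ≤ (r : ℝ) / k := by positivity
  have hpar : (u + q) % 2 = r % 2 := by
    have h2 : h % 2 = 1 := Nat.odd_iff.mp hhodd
    have k2 : k % 2 = 1 := Nat.odd_iff.mp hkodd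
    have e1 : (h * u) % 2 = u % 2 := by
      rw [Nat.mul_mod, h2, one_mul]
      omega
    have e2 : (k * q) % 2 = q % 2 := by
      rw [Nat.mul_mod, k2, one_mul]
      omega
    have e3 : (k * q + r) % 2 = (h * u) % 2 := by rw [hdm]
    rw [Nat.add_mod, e2] at e3
    rw [e1] at e3
    omega
  have : (-1 : ℝ) ^ u * (-1 : ℝ) ^ q = (-1 : ℝ) ^ r := by
    rw [← pow_add]
    exact neg_one_pow_congr' hpar
  calc (-1 : ℝ) ^ u * ((-1 : ℝ) ^ q * eulerFun p ((r : ℝ) / k))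
      = ((-1 : ℝ) ^ u * (-1 : ℝ) ^ q) * eulerFun p ((r : ℝ) / k) := by ring
    _ = (-1 : ℝ) ^ r * eulerFun p ((r : ℝ) / k) := by rw [this]

lemma sum_range_eulerFun_mul (p h k : ℕ) (hh0 : 0 < h) (hk0 : 0 < k) (hhodd : Odd h)
    (hkodd : Odd k) (hcop : Nat.Coprime h k) :
    ∑ u ∈ Finset.range k, (-1 : ℝ) ^ u * eulerFun p ((h : ℝ) * u / k)
      = ∑ r ∈ Finset.range k, (-1 : ℝ) ^ r * eulerFun p ((r : ℝ) / k) := by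
  rcases eq_or_lt_of_le (show 1 ≤ k from hk0) with hk1 | hk1
  · rw [← hk1]
    simp
  obtain ⟨h', -, hh'⟩ := Nat.exists_mul_mod_eq_one_of_coprime hcop hk1
  apply Finset.sum_nbij' (fun u => h * u % k) (fun r => h' * r % k)
  · intro u hu
    simp only [Finset.mem_range]
    exact Nat.mod_lt _ hk0
  · intro r hr
    simp only [Finset.mem_range]
    exact Nat.mod_lt _ hk0
  · intro u hu
    simp only [Finset.mem_range] at hu
    have m1 : h' * (h * u % k) % k = h' * (h * u) % k := by
      rw [Nat.mul_mod, Nat.mod_mod_of_dvd _ dvd_rfl]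
      rw [← Nat.mul_mod]
    have m2 : h' * (h * u) % k = u % k := by
      have : h' * (h * u) = (h * h') * u := by ring
      rw [this, Nat.mul_mod, hh', one_mul, Nat.mod_mod_of_dvd _ dvd_rfl]
    rw [m1, m2, Nat.mod_eq_of_lt hu]
  · intro r hr
    simp only [Finset.mem_range] at hr
    have m1 : h * (h' * r % k) % k = h * (h' * r) % k := by
      rw [Nat.mul_mod, Nat.mod_mod_of_dvd _ dvd_rfl]
      rw [← Nat.mul_mod]
    have m2 : h * (h' * r) % k = r % k := by
      have : h * (h' * r) = (h * h') * r := by ring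
      rw [this, Nat.mul_mod, hh', one_mul, Nat.mod_mod_of_dvd _ dvd_rfl]
    rw [m1, m2, Nat.mod_eq_of_lt hr]
  · intro u hu
    exact eulerFun_mod_transform p h k hk0 hhodd hkodd u


lemma A_Ico (p h k : ℕ) (hh0 : 0 < h) (hk0 : 0 < k) (hhodd : Odd h) (hkodd : Odd k)
    (hcop : Nat.Coprime h k) :
    (k : ℝ) ^ p * ∑ u ∈ Finset.Ico 1 k, (-1 : ℝ) ^ u * eulerFun p ((h : ℝ) * u / k) =
      (eulerNumber p : ℝ) - (k : ℝ) ^ p * (eulerNumber p : ℝ) := by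
  have hsplit : ∑ u ∈ Finset.range k, (-1 : ℝ) ^ u * eulerFun p ((h : ℝ) * u / k)
      = (eulerNumber p : ℝ) + ∑ u ∈ Finset.Ico 1 k, (-1 : ℝ) ^ u * eulerFun p ((h : ℝ) * u / k) := by
    rw [Finset.range_eq_Ico, Finset.sum_eq_sum_Ico_succ_bot hk0]
    simp [eulerFun_zero]
  have hraabe : (k : ℝ) ^ p * ∑ r ∈ Finset.range k, (-1 : ℝ) ^ r * eulerFun p ((r : ℝ) / k)
      = (eulerNumber p : ℝ) := by
    have := eulerFun_raabe p k hkodd 0 le_rfl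
    rw [mul_zero, eulerFun_zero] at this
    rw [← this]
    congr 1
    apply Finset.sum_congr rfl
    intro v _
    rw [zero_add]
  rw [← sum_range_eulerFun_mul p h k hh0 hk0 hhodd hkodd hcop] at hraabe
  rw [hsplit, mul_add] at hraabe
  linarith

lemma weighted_single (p m : ℕ) (hm0 : 0 < m) (hmodd : Odd m) (hpodd : Odd p) :
    2 * (m : ℝ) ^ p * ∑ u ∈ Finset.Ico 1 m, (-1 : ℝ) ^ u * ((u : ℝ) / m) * eulerFun p ((u : ℝ) / m) =
      (eulerNumber p : ℝ) - (m : ℝ) ^ p * (eulerNumber p : ℝ) := by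
  have hmR : (0 : ℝ) < m := by exact_mod_cast hm0
  set S := ∑ u ∈ Finset.Ico 1 m, (-1 : ℝ) ^ u * ((u : ℝ) / m) * eulerFun p ((u : ℝ) / m) with hS
  have hrefl : S = ∑ u ∈ Finset.Ico 1 m,
      (-1 : ℝ) ^ u * (1 - (u : ℝ) / m) * eulerFun p ((u : ℝ) / m) := by
    rw [hS]
    apply Finset.sum_nbij' (fun u => m - u) (fun u => m - u)
    · intro u hu; simp only [Finset.mem_Ico] at *; omega
    · intro u hu; simp only [Finset.mem_Ico] at *; omega
    · intro u hu; simp only [Finset.mem_Ico] at hu; omega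
    · intro u hu; simp only [Finset.mem_Ico] at hu; omega
    · intro u hu
      simp only [Finset.mem_Ico] at hu
      have hcast : ((m - u : ℕ) : ℝ) = (m : ℝ) - u := by
        push_cast [Nat.cast_sub (by omega : u ≤ m)]
        ring
      have hsign : (-1 : ℝ) ^ (m - u) = -(-1 : ℝ) ^ u := by
        have : (m - u) % 2 = (u + 1) % 2 := by
          have := Nat.odd_iff.mp hmodd
          omega
        rw [neg_one_pow_congr' this, pow_succ]
        ring
      have hargf : ((m - u : ℕ) : ℝ) / m = 1 - (u : ℝ) / m := by
        rw [hcast]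
        field_simp
      have hbound0 : (0:ℝ) ≤ (u : ℝ) / m := by positivity
      have hbound1 : (u : ℝ) / m < 1 := by
        rw [div_lt_one hmR]
        exact_mod_cast hu.2
      rw [hargf, hsign, eulerFun_one_sub p hpodd _ hbound0 hbound1]
      ring
  have hdouble : 2 * S = ∑ u ∈ Finset.Ico 1 m, (-1 : ℝ) ^ u * eulerFun p ((u : ℝ) / m) := by
    rw [two_mul]
    nth_rewrite 2 [hrefl]
    nth_rewrite 1 [hS]
    rw [← Finset.sum_add_distrib]
    apply Finset.sum_congr rfl
    intro u _
    ring
  have hA := A_Ico p 1 m one_pos hm0 odd_one hmodd (Nat.coprime_one_left m)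
  have harg : ∀ u : ℕ, (1 : ℝ) * (u : ℝ) / m = (u : ℝ) / m := by intro u; ring_nf
  rw [show ∑ u ∈ Finset.Ico 1 m, (-1 : ℝ) ^ u * eulerFun p ((1 : ℕ) * (u : ℝ) / m)
      = ∑ u ∈ Finset.Ico 1 m, (-1 : ℝ) ^ u * eulerFun p ((u : ℝ) / m) from
    Finset.sum_congr rfl (fun u _ => by norm_num)] at hA
  calc 2 * (m : ℝ) ^ p * S = (m : ℝ) ^ p * (2 * S) := by ring
    _ = (eulerNumber p : ℝ) - (m : ℝ) ^ p * (eulerNumber p : ℝ) := by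
        rw [hdouble, ← hA]

-- (I') identity
lemma rhs_sum_eval (h k p : ℕ) (hp : 1 ≤ p) (hpodd : Odd p) :
    ∑ s ∈ Finset.range (p + 1),
        (p.choose s : ℝ) * (h : ℝ) ^ s * (k : ℝ) ^ (p - s) * (eulerNumber s : ℝ) *
          (eulerNumber (p - s) : ℝ)
      = (k : ℝ) ^ p * (eulerNumber p : ℝ) + (h : ℝ) ^ p * (eulerNumber p : ℝ) := by
  have hp0 : p ≠ 0 := by omega
  have hsub : ∑ s ∈ Finset.range (p + 1),
      (p.choose s : ℝ) * (h : ℝ) ^ s * (k : ℝ) ^ (p - s) * (eulerNumber s : ℝ) *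
        (eulerNumber (p - s) : ℝ)
      = ∑ s ∈ ({0, p} : Finset ℕ),
          (p.choose s : ℝ) * (h : ℝ) ^ s * (k : ℝ) ^ (p - s) * (eulerNumber s : ℝ) *
            (eulerNumber (p - s) : ℝ) := by
    symm
    apply Finset.sum_subset
    · intro s hs
      simp only [Finset.mem_insert, Finset.mem_singleton] at hs
      simp only [Finset.mem_range]
      omega
    · intro s hs hns
      simp only [Finset.mem_range] at hs
      simp only [Finset.mem_insert, Finset.mem_singleton, not_or] at hns
      obtain ⟨hs0, hsp⟩ := hns
      rcases Nat.even_or_odd s with hse | hso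
      · rcases hse with ⟨c, hc⟩
        rw [eulerNumber_even_zero s (by omega) ⟨c, hc⟩]
        ring
      · have hev : Even (p - s) := by
          rcases hpodd with ⟨a, ha⟩
          rcases hso with ⟨b, hb⟩
          refine ⟨(p - s) / 2, ?_⟩
          omega
        rcases hev with ⟨c, hc⟩
        rcases hpodd with ⟨a, ha⟩
        rcases hso with ⟨b, hb⟩
        rw [eulerNumber_even_zero (p - s) (by omega) ⟨c, hc⟩]
        ring
  rw [hsub, Finset.sum_pair (by omega : (0 : ℕ) ≠ p)]
  have he0 : (eulerNumber 0 : ℝ) = 1 := by norm_num [eulerNumber]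
  simp only [Nat.choose_zero_right, Nat.choose_self, Nat.sub_zero, Nat.sub_self, pow_zero,
    Nat.cast_one, he0]
  ring

/-- Theorem 9 (reciprocity law for Dedekind-type DC sums): for coprime odd positive
`h, k` and odd `p ≥ 1`,
`k^p T_p(h,k) + h^p T_p(k,h) = ∑_{s=0}^{p} C(p,s) h^s k^{p−s} E_s E_{p−s} − 2 E_p`. -/
theorem dcSum_reciprocity (h k p : ℕ) (hh : 0 < h) (hk : 0 < k)
    (hhodd : Odd h) (hkodd : Odd k) (hcop : Nat.Coprime h k)
    (hp : 1 ≤ p) (hpodd : Odd p) :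
    (k : ℝ) ^ p * dcSum p h k + (h : ℝ) ^ p * dcSum p k h =
      ∑ s ∈ Finset.range (p + 1),
          (p.choose s : ℝ) * (h : ℝ) ^ s * (k : ℝ) ^ (p - s) * (eulerNumber s : ℝ) *
            (eulerNumber (p - s) : ℝ)
        - 2 * (eulerNumber p : ℝ) := by
  have hkR : (0 : ℝ) < (k : ℝ) := by exact_mod_cast hk
  have hhR : (0 : ℝ) < (h : ℝ) := by exact_mod_cast hh
  -- rewrite the RHS sum
  rw [rhs_sum_eval h k p hp hpodd]
  -- rewrite dcSum in terms of X sums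
  have hdc : ∀ (a b : ℕ), 0 < b → dcSum p a b =
      -2 * ∑ u ∈ Finset.Ico 1 b, (-1 : ℝ) ^ u * ((u : ℝ) / b) * eulerFun p ((a : ℝ) * u / b) := by
    intro a b hb
    unfold dcSum
    rw [Finset.mul_sum, Finset.mul_sum]
    apply Finset.sum_congr rfl
    intro u hu
    simp only [Finset.mem_Ico] at hu
    have h1 : u - 1 + 1 = u := by omega
    have hsign : (-1 : ℝ) ^ u = (-1 : ℝ) ^ (u - 1) * (-1) := by
      rw [← pow_succ, h1]
    rw [hsign]
    ring
  rw [hdc h k hk, hdc k h hh]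
  set e := (eulerNumber p : ℝ) with he
  set X1 := ∑ u ∈ Finset.Ico 1 k, (-1 : ℝ) ^ u * ((u : ℝ) / k) * eulerFun p ((h : ℝ) * u / k) with hX1
  set X2 := ∑ v ∈ Finset.Ico 1 h, (-1 : ℝ) ^ v * ((v : ℝ) / h) * eulerFun p ((k : ℝ) * v / h) with hX2
  -- inner sums
  set S1 : ℕ → ℝ := fun u => ∑ v ∈ Finset.Ico 1 h,
      (-1 : ℝ) ^ v * eulerFun p ((u : ℝ) / k + (v : ℝ) / h) with hS1def
  set S2 : ℕ → ℝ := fun v => ∑ u ∈ Finset.Ico 1 k,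
      (-1 : ℝ) ^ u * eulerFun p ((u : ℝ) / k + (v : ℝ) / h) with hS2def
  have hS1 : ∀ u : ℕ, (h : ℝ) ^ p * S1 u =
      eulerFun p ((h : ℝ) * u / k) - (h : ℝ) ^ p * eulerFun p ((u : ℝ) / k) := by
    intro u
    have h0 : (0 : ℝ) ≤ (u : ℝ) / k := by positivity
    have := sum_Ico_eulerFun p h hhodd ((u : ℝ) / k) h0
    rw [show (h : ℝ) * ((u : ℝ) / k) = (h : ℝ) * u / k by ring] at this
    exact this
  have hS2 : ∀ v : ℕ, (k : ℝ) ^ p * S2 v =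
      eulerFun p ((k : ℝ) * v / h) - (k : ℝ) ^ p * eulerFun p ((v : ℝ) / h) := by
    intro v
    have h0 : (0 : ℝ) ≤ (v : ℝ) / h := by positivity
    have hlem := sum_Ico_eulerFun p k hkodd ((v : ℝ) / h) h0
    rw [show (k : ℝ) * ((v : ℝ) / h) = (k : ℝ) * v / h by ring] at hlem
    rw [hS2def]
    simp only
    rw [show ∑ u ∈ Finset.Ico 1 k, (-1 : ℝ) ^ u * eulerFun p ((u : ℝ) / k + (v : ℝ) / h)
        = ∑ u ∈ Finset.Ico 1 k, (-1 : ℝ) ^ u * eulerFun p ((v : ℝ) / h + (u : ℝ) / k) from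
      Finset.sum_congr rfl (fun u _ => by rw [add_comm ((u : ℝ) / k) ((v : ℝ) / h)])]
    exact hlem
  -- the weighted double sum
  set W := ∑ u ∈ Finset.Ico 1 k, ∑ v ∈ Finset.Ico 1 h,
      (-1 : ℝ) ^ (u + v) * ((u : ℝ) / k + (v : ℝ) / h) *
        eulerFun p ((u : ℝ) / k + (v : ℝ) / h) with hW
  have hbound : ∀ u ∈ Finset.Ico 1 k, ∀ v ∈ Finset.Ico 1 h,
      (0 : ℝ) < (u : ℝ) / k + (v : ℝ) / h ∧ (u : ℝ) / k + (v : ℝ) / h < 2 := by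
    intro u hu v hv
    simp only [Finset.mem_Ico] at hu hv
    constructor
    · have h1 : (0 : ℝ) < (u : ℝ) / k := by
        apply div_pos _ hkR
        exact_mod_cast hu.1
      have h2 : (0 : ℝ) ≤ (v : ℝ) / h := by positivity
      linarith
    · have h1 : (u : ℝ) / k < 1 := by
        rw [div_lt_one hkR]
        exact_mod_cast hu.2
      have h2 : (v : ℝ) / h < 1 := by
        rw [div_lt_one hhR]
        exact_mod_cast hv.2
      linarith
  have hreindex : W = ∑ u ∈ Finset.Ico 1 k, ∑ v ∈ Finset.Ico 1 h,
      (-1 : ℝ) ^ (u + v) * (2 - ((u : ℝ) / k + (v : ℝ) / h)) *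
        eulerFun p ((u : ℝ) / k + (v : ℝ) / h) := by
    rw [hW, ← Finset.sum_product', ← Finset.sum_product']
    apply Finset.sum_nbij' (fun a : ℕ × ℕ => (k - a.1, h - a.2))
      (fun a : ℕ × ℕ => (k - a.1, h - a.2))
    · intro a ha
      simp only [Finset.mem_product, Finset.mem_Ico] at ha ⊢
      omega
    · intro a ha
      simp only [Finset.mem_product, Finset.mem_Ico] at ha ⊢
      omega
    · rintro ⟨u, v⟩ ha
      simp only [Finset.mem_product, Finset.mem_Ico] at ha
      simp only [Prod.mk.injEq]
      omega
    · rintro ⟨u, v⟩ ha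
      simp only [Finset.mem_product, Finset.mem_Ico] at ha
      simp only [Prod.mk.injEq]
      omega
    · rintro ⟨u, v⟩ ha
      simp only [Finset.mem_product, Finset.mem_Ico] at ha
      obtain ⟨⟨hu1, hu2⟩, ⟨hv1, hv2⟩⟩ := ha
      simp only
      have hcastu : ((k - u : ℕ) : ℝ) = (k : ℝ) - u := by
        push_cast [Nat.cast_sub (by omega : u ≤ k)]; ring
      have hcastv : ((h - v : ℕ) : ℝ) = (h : ℝ) - v := by
        push_cast [Nat.cast_sub (by omega : v ≤ h)]; ring
      have hargs : ((k - u : ℕ) : ℝ) / k + ((h - v : ℕ) : ℝ) / h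
          = 2 - ((u : ℝ) / k + (v : ℝ) / h) := by
        rw [hcastu, hcastv]
        field_simp
        ring
      have hsign : (-1 : ℝ) ^ ((k - u) + (h - v)) = (-1 : ℝ) ^ (u + v) := by
        apply neg_one_pow_congr'
        have hk2 := Nat.odd_iff.mp hkodd
        have hh2 := Nat.odd_iff.mp hhodd
        omega
      have hx := hbound u (by simp only [Finset.mem_Ico]; omega)
        v (by simp only [Finset.mem_Ico]; omega)
      rw [hargs, hsign, eulerFun_two_sub p hpodd _ (le_of_lt hx.1) hx.2]
      ring
  have hpair : W = ∑ u ∈ Finset.Ico 1 k, ∑ v ∈ Finset.Ico 1 h,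
      (-1 : ℝ) ^ (u + v) * eulerFun p ((u : ℝ) / k + (v : ℝ) / h) := by
    have h2W : W + W = 2 * ∑ u ∈ Finset.Ico 1 k, ∑ v ∈ Finset.Ico 1 h,
        (-1 : ℝ) ^ (u + v) * eulerFun p ((u : ℝ) / k + (v : ℝ) / h) := by
      nth_rewrite 2 [hreindex]
      nth_rewrite 1 [hW]
      rw [Finset.mul_sum, ← Finset.sum_add_distrib]
      apply Finset.sum_congr rfl
      intro u _
      rw [Finset.mul_sum, ← Finset.sum_add_distrib]
      apply Finset.sum_congr rfl
      intro v _
      ring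
    linarith
  -- expand W as weighted sums
  have hW1 : W = (∑ u ∈ Finset.Ico 1 k, (-1 : ℝ) ^ u * ((u : ℝ) / k) * S1 u)
      + ∑ v ∈ Finset.Ico 1 h, (-1 : ℝ) ^ v * ((v : ℝ) / h) * S2 v := by
    rw [hW]
    have hterm : ∀ u ∈ Finset.Ico 1 k, ∀ v ∈ Finset.Ico 1 h,
        (-1 : ℝ) ^ (u + v) * ((u : ℝ) / k + (v : ℝ) / h) *
            eulerFun p ((u : ℝ) / k + (v : ℝ) / h)
          = (-1 : ℝ) ^ u * ((u : ℝ) / k) *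
              ((-1 : ℝ) ^ v * eulerFun p ((u : ℝ) / k + (v : ℝ) / h))
            + (-1 : ℝ) ^ v * ((v : ℝ) / h) *
              ((-1 : ℝ) ^ u * eulerFun p ((u : ℝ) / k + (v : ℝ) / h)) := by
      intro u _ v _
      rw [pow_add]
      ring
    calc ∑ u ∈ Finset.Ico 1 k, ∑ v ∈ Finset.Ico 1 h,
        (-1 : ℝ) ^ (u + v) * ((u : ℝ) / k + (v : ℝ) / h) *
          eulerFun p ((u : ℝ) / k + (v : ℝ) / h)
        = ∑ u ∈ Finset.Ico 1 k, ∑ v ∈ Finset.Ico 1 h,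
            ((-1 : ℝ) ^ u * ((u : ℝ) / k) *
              ((-1 : ℝ) ^ v * eulerFun p ((u : ℝ) / k + (v : ℝ) / h))
            + (-1 : ℝ) ^ v * ((v : ℝ) / h) *
              ((-1 : ℝ) ^ u * eulerFun p ((u : ℝ) / k + (v : ℝ) / h))) := by
          apply Finset.sum_congr rfl
          intro u hu
          exact Finset.sum_congr rfl (fun v hv => hterm u hu v hv)
      _ = (∑ u ∈ Finset.Ico 1 k, ∑ v ∈ Finset.Ico 1 h,
            (-1 : ℝ) ^ u * ((u : ℝ) / k) *
              ((-1 : ℝ) ^ v * eulerFun p ((u : ℝ) / k + (v : ℝ) / h)))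
          + ∑ u ∈ Finset.Ico 1 k, ∑ v ∈ Finset.Ico 1 h,
            (-1 : ℝ) ^ v * ((v : ℝ) / h) *
              ((-1 : ℝ) ^ u * eulerFun p ((u : ℝ) / k + (v : ℝ) / h)) := by
          rw [← Finset.sum_add_distrib]
          apply Finset.sum_congr rfl
          intro u _
          rw [← Finset.sum_add_distrib]
      _ = (∑ u ∈ Finset.Ico 1 k, (-1 : ℝ) ^ u * ((u : ℝ) / k) * S1 u)
          + ∑ v ∈ Finset.Ico 1 h, (-1 : ℝ) ^ v * ((v : ℝ) / h) * S2 v := by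
          congr 1
          · apply Finset.sum_congr rfl
            intro u _
            rw [hS1def]
            simp only
            rw [Finset.mul_sum]
          · rw [Finset.sum_comm]
            apply Finset.sum_congr rfl
            intro v _
            rw [hS2def]
            simp only
            rw [Finset.mul_sum]
  have hW2 : W = ∑ u ∈ Finset.Ico 1 k, (-1 : ℝ) ^ u * S1 u := by
    rw [hpair]
    apply Finset.sum_congr rfl
    intro u _
    rw [hS1def]
    simp only
    rw [Finset.mul_sum]
    apply Finset.sum_congr rfl
    intro v _
    rw [pow_add]
    ring
  have hmain : (∑ u ∈ Finset.Ico 1 k, (-1 : ℝ) ^ u * ((u : ℝ) / k) * S1 u)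
      + (∑ v ∈ Finset.Ico 1 h, (-1 : ℝ) ^ v * ((v : ℝ) / h) * S2 v)
      = ∑ u ∈ Finset.Ico 1 k, (-1 : ℝ) ^ u * S1 u := by
    rw [← hW1, hW2]
  -- numeric evaluations
  set SG1 := ∑ u ∈ Finset.Ico 1 k, (-1 : ℝ) ^ u * ((u : ℝ) / k) * S1 u with hSG1
  set SG2 := ∑ v ∈ Finset.Ico 1 h, (-1 : ℝ) ^ v * ((v : ℝ) / h) * S2 v with hSG2
  set SU1 := ∑ u ∈ Finset.Ico 1 k, (-1 : ℝ) ^ u * S1 u with hSU1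
  set b1 := ∑ u ∈ Finset.Ico 1 k, (-1 : ℝ) ^ u * ((u : ℝ) / k) * eulerFun p ((u : ℝ) / k) with hb1
  set b2 := ∑ v ∈ Finset.Ico 1 h, (-1 : ℝ) ^ v * ((v : ℝ) / h) * eulerFun p ((v : ℝ) / h) with hb2
  set A1 := ∑ u ∈ Finset.Ico 1 k, (-1 : ℝ) ^ u * eulerFun p ((h : ℝ) * u / k) with hA1
  set B1 := ∑ u ∈ Finset.Ico 1 k, (-1 : ℝ) ^ u * eulerFun p ((u : ℝ) / k) with hB1
  have ha1 : (h : ℝ) ^ p * SG1 = X1 - (h : ℝ) ^ p * b1 := by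
    rw [hSG1, hX1, hb1, Finset.mul_sum, Finset.mul_sum, ← Finset.sum_sub_distrib]
    apply Finset.sum_congr rfl
    intro u _
    linear_combination ((-1 : ℝ) ^ u * ((u : ℝ) / k)) * hS1 u
  have ha2 : (k : ℝ) ^ p * SG2 = X2 - (k : ℝ) ^ p * b2 := by
    rw [hSG2, hX2, hb2, Finset.mul_sum, Finset.mul_sum, ← Finset.sum_sub_distrib]
    apply Finset.sum_congr rfl
    intro v _
    linear_combination ((-1 : ℝ) ^ v * ((v : ℝ) / h)) * hS2 v
  have h3 : (h : ℝ) ^ p * SU1 = A1 - (h : ℝ) ^ p * B1 := by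
    rw [hSU1, hA1, hB1, Finset.mul_sum, Finset.mul_sum, ← Finset.sum_sub_distrib]
    apply Finset.sum_congr rfl
    intro u _
    linear_combination ((-1 : ℝ) ^ u) * hS1 u
  have h4 : (k : ℝ) ^ p * A1 = e - (k : ℝ) ^ p * e :=
    A_Ico p h k hh hk hhodd hkodd hcop
  have h5 : (k : ℝ) ^ p * B1 = e - (k : ℝ) ^ p * e := by
    have := A_Ico p 1 k one_pos hk odd_one hkodd (Nat.coprime_one_left k)
    rw [hB1]
    rw [show ∑ u ∈ Finset.Ico 1 k, (-1 : ℝ) ^ u * eulerFun p ((u : ℝ) / k)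
        = ∑ u ∈ Finset.Ico 1 k, (-1 : ℝ) ^ u * eulerFun p (((1 : ℕ) : ℝ) * u / k) from
      Finset.sum_congr rfl (fun u _ => by norm_num)]
    exact this
  have h6 : 2 * (k : ℝ) ^ p * b1 = e - (k : ℝ) ^ p * e :=
    weighted_single p k hk hkodd hpodd
  have h7 : 2 * (h : ℝ) ^ p * b2 = e - (h : ℝ) ^ p * e :=
    weighted_single p h hh hhodd hpodd
  have k1 : (k : ℝ) ^ p * X1 + (h : ℝ) ^ p * X2
      = (k : ℝ) ^ p * (h : ℝ) ^ p * b1 + (k : ℝ) ^ p * (h : ℝ) ^ p * b2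
        + e - (k : ℝ) ^ p * e - (h : ℝ) ^ p * e + (k : ℝ) ^ p * (h : ℝ) ^ p * e := by
    linear_combination (-((k : ℝ) ^ p)) * ha1 + (-((h : ℝ) ^ p)) * ha2
      + ((k : ℝ) ^ p * (h : ℝ) ^ p) * hmain + ((k : ℝ) ^ p) * h3 + h4 - ((h : ℝ) ^ p) * h5
  linear_combination (-2 : ℝ) * k1 + (-((h : ℝ) ^ p)) * h6 + (-((k : ℝ) ^ p)) * h7
end

section
/- (Fourier expansion of the Euler function) For every integer m ≥ 1 and every real number x, one has Ē_m(x) = 2 · m! · Σ_{n ∈ ℤ} e^{(2n+1)πix} / ((2n+1)πi)^{m+1}, where the series over all integers n converges absolutely. -/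
open Finset

lemma eulerNumber_rec (n : ℕ) :
    ∑ l ∈ Finset.range (n + 2), (((n+1).choose l : ℚ) * eulerNumber l) + eulerNumber (n+1) = 0 := by
  have h : eulerNumber (n+1) = -(∑ l : Fin (n + 1), ((n + 1).choose l : ℚ) * eulerNumber l) / 2 := by
    rw [eulerNumber]
  rw [Fin.sum_univ_eq_sum_range (fun l => ((n+1).choose l : ℚ) * eulerNumber l)] at h
  rw [Finset.sum_range_succ, Nat.choose_self, h]
  push_cast
  ring

lemma eulerNumber_rec_real (n : ℕ) :
    ∑ l ∈ Finset.range (n + 2), (((n+1).choose l : ℝ) * (eulerNumber l : ℝ)) + (eulerNumber (n+1) : ℝ) = 0 := by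
  have h := eulerNumber_rec n
  have h2 : ((∑ l ∈ Finset.range (n + 2), (((n+1).choose l : ℚ) * eulerNumber l) + eulerNumber (n+1) : ℚ) : ℝ) = 0 := by
    rw [h]; norm_num
  push_cast at h2
  exact h2

lemma hasDerivAt_eulerPoly (n : ℕ) (x : ℝ) :
    HasDerivAt (eulerPoly (n+1)) ((n+1 : ℝ) * eulerPoly n x) x := by
  have h : ∀ l ∈ Finset.range (n+2), HasDerivAt (fun y : ℝ => ((n+1).choose l : ℝ) * (eulerNumber l : ℝ) * y^(n+1-l))
      (((n+1).choose l : ℝ) * (eulerNumber l : ℝ) * (((n+1-l : ℕ) : ℝ) * x^(n+1-l-1))) x := by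
    intro l _
    exact (hasDerivAt_pow (n+1-l) x).const_mul _
  have hsum := HasDerivAt.fun_sum h
  have : (fun y : ℝ => ∑ l ∈ Finset.range (n+2), ((n+1).choose l : ℝ) * (eulerNumber l : ℝ) * y^(n+1-l)) = eulerPoly (n+1) := rfl
  rw [this] at hsum
  convert hsum using 1
  · rfl
  · rfl
  rw [Finset.sum_range_succ]
  have hz : n + 1 - (n+1) = 0 := by omega
  rw [hz]
  simp only [Nat.cast_zero, zero_mul, mul_zero, add_zero]
  rw [eulerPoly, Finset.mul_sum]
  refine Finset.sum_congr rfl fun l hl => ?_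
  rw [Finset.mem_range] at hl
  have e1n : (n+1).choose l * (n+1-l) = (n+1) * n.choose l := by
    rw [Nat.mul_comm (n+1) (n.choose l), Nat.choose_mul_succ_eq n l]
  have e1 : ((n+1).choose l : ℝ) * ((n+1-l : ℕ) : ℝ) = ((n+1 : ℕ) : ℝ) * (n.choose l : ℝ) := by
    exact_mod_cast congrArg (Nat.cast : ℕ → ℝ) e1n
  have e2 : n + 1 - l - 1 = n - l := by omega
  rw [e2]
  push_cast at e1
  push_cast
  linear_combination (-((eulerNumber l : ℝ) * x^(n-l))) * e1

lemma bernoulliFun_add_one (k : ℕ) (x : ℝ) :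
    bernoulliFun k (x + 1) = bernoulliFun k x + k * x ^ (k-1) := by
  have hpoly : (Polynomial.bernoulli k).comp (Polynomial.X + 1)
      = Polynomial.bernoulli k + (k : ℚ) • Polynomial.X ^ (k-1) := by
    apply Polynomial.funext
    intro q
    simp only [Polynomial.eval_comp, Polynomial.eval_add, Polynomial.eval_X, Polynomial.eval_one,
      Polynomial.eval_smul, Polynomial.eval_pow, smul_eq_mul]
    rw [add_comm q 1, Polynomial.bernoulli_eval_one_add]
  have := congrArg (fun p => (Polynomial.map (algebraMap ℚ ℝ) p).eval x) hpoly
  rw [Polynomial.map_comp] at this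
  simp only [Polynomial.map_add, Polynomial.map_X, Polynomial.map_one, Polynomial.eval_comp,
    Polynomial.eval_add, Polynomial.eval_X, Polynomial.eval_one, Polynomial.map_smul,
    Polynomial.eval_smul, Polynomial.map_pow, Polynomial.eval_pow, smul_eq_mul] at this
  rw [bernoulliFun, bernoulliFun, this]
  norm_num

lemma bernoulliFun_one' (x : ℝ) : bernoulliFun 1 x = x - 1/2 := by
  rw [bernoulliFun]
  simp [Polynomial.bernoulli]
  norm_num [Finset.sum_range_succ]
  ring

lemma eulerPoly_eq_bernoulli (m : ℕ) (x : ℝ) :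
    eulerPoly m x = 2^(m+1)/(m+1) * (bernoulliFun (m+1) ((x+1)/2) - bernoulliFun (m+1) (x/2)) := by
  induction m generalizing x with
  | zero =>
      rw [eulerPoly]
      simp [eulerNumber, bernoulliFun_one']
      ring
  | succ m ih =>
      set D : ℝ → ℝ := fun y => eulerPoly (m+1) y
        - 2^(m+1+1)/(m+1+1) * (bernoulliFun (m+1+1) ((y+1)/2) - bernoulliFun (m+1+1) (y/2)) with hD
      have hm2 : ((m:ℝ)+1+1) ≠ 0 := by positivity
      have hm1 : ((m:ℝ)+1) ≠ 0 := by positivity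
      have hderiv : ∀ y : ℝ, HasDerivAt D 0 y := by
        intro y
        have hb1 : HasDerivAt (fun z : ℝ => bernoulliFun (m+2) ((z+1)/2))
            (((m+2 : ℕ) : ℝ) * bernoulliFun (m+1) ((y+1)/2) * (1/2)) y := by
          have haff : HasDerivAt (fun z : ℝ => (z+1)/2) (1/2) y :=
            ((hasDerivAt_id y).add_const 1).div_const 2
          have := (hasDerivAt_bernoulliFun (m+2) ((y+1)/2)).comp y haff
          exact this
        have hb2 : HasDerivAt (fun z : ℝ => bernoulliFun (m+2) (z/2))
            (((m+2 : ℕ) : ℝ) * bernoulliFun (m+1) (y/2) * (1/2)) y := by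
          have haff : HasDerivAt (fun z : ℝ => z/2) (1/2) y := (hasDerivAt_id y).div_const 2
          have := (hasDerivAt_bernoulliFun (m+2) (y/2)).comp y haff
          exact this
        have he := hasDerivAt_eulerPoly m y
        have hcomb := he.sub (((hb1.sub hb2).const_mul (2^(m+1+1)/(m+1+1) : ℝ)))
        convert hcomb using 1
        · rfl
        · rfl
        · rfl
        rw [ih y]
        push_cast
        field_simp
        ring
      have hdiff : Differentiable ℝ D := fun y => (hderiv y).differentiableAt
      have hconst : ∀ y z : ℝ, D y = D z :=
        is_const_of_deriv_eq_zero hdiff (fun y => (hderiv y).deriv)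
      have hrefl : D 1 + D 0 = 0 := by
        have he := eulerPoly_add_one (m+1) 0
        rw [zero_add] at he
        have hb := bernoulliFun_add_one (m+2) 0
        rw [zero_add] at hb
        have h0 : (0:ℝ) ^ (m+1) = 0 := by
          exact zero_pow (Nat.succ_ne_zero m)
        have hb' : bernoulliFun (m+2) 1 = bernoulliFun (m+2) 0 := by
          simpa [h0] using hb
        simp only [hD]
        norm_num
        have hb'' : bernoulliFun (m+1+1) 1 = bernoulliFun (m+1+1) 0 := hb'
        have he'' : eulerPoly (m+1) 1 + eulerPoly (m+1) 0 = 2 * 0 ^ (m+1) := he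
        linear_combination he'' - 2 ^ (m + 1 + 1) / ((m:ℝ) + 1 + 1) * hb''
      have hD0 : D 0 = 0 := by
        have := hconst 1 0
        linarith [hrefl, this]
      have := hconst x 0
      rw [hD0] at this
      have : D x = 0 := this
      rw [hD] at this
      simp only at this
      push_cast
      push_cast at this
      linarith [this]

lemma eulerFun_eq_bernoulli (m : ℕ) (x : ℝ) :
    eulerFun m x = 2^(m+1)/(m+1) *
      (bernoulliFun (m+1) (Int.fract ((x+1)/2)) - bernoulliFun (m+1) (Int.fract (x/2))) := by
  have hf0 : (0:ℝ) ≤ Int.fract x := Int.fract_nonneg x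
  have hf1 : Int.fract x < 1 := Int.fract_lt_one x
  have hxe : x - ⌊x⌋ = Int.fract x := Int.self_sub_floor x
  have hfl : (⌊x⌋ : ℝ) + Int.fract x = x := Int.floor_add_fract x
  rw [eulerFun, hxe]
  have f1 : Int.fract ((Int.fract x + 1)/2) = (Int.fract x + 1)/2 :=
    Int.fract_eq_self.mpr ⟨by linarith, by linarith⟩
  have f2 : Int.fract (Int.fract x / 2) = Int.fract x / 2 :=
    Int.fract_eq_self.mpr ⟨by linarith, by linarith⟩
  rcases Int.even_or_odd ⌊x⌋ with ⟨a, ha⟩ | ⟨a, ha⟩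
  · have hx2 : x/2 = (a:ℝ) + Int.fract x / 2 := by
      rw [ha] at hfl; push_cast at hfl; linarith
    have hx2' : (x+1)/2 = (a:ℝ) + (Int.fract x + 1) / 2 := by linarith [hx2]
    rw [hx2, hx2']
    rw [show ((a:ℝ) + (Int.fract x + 1) / 2) = ((a:ℤ):ℝ) + (Int.fract x + 1) / 2 by norm_num,
      show ((a:ℝ) + Int.fract x / 2) = ((a:ℤ):ℝ) + Int.fract x / 2 by norm_num,
      Int.fract_intCast_add, Int.fract_intCast_add, f1, f2]
    have hpow : (-1 : ℝ) ^ ⌊x⌋ = 1 := Even.neg_one_zpow ⟨a, ha⟩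
    rw [hpow, one_mul, eulerPoly_eq_bernoulli]
  · have hx2 : x/2 = (a:ℝ) + (Int.fract x + 1) / 2 := by
      rw [ha] at hfl; push_cast at hfl; linarith
    have hx2' : (x+1)/2 = ((a+1 : ℤ):ℝ) + Int.fract x / 2 := by push_cast; linarith [hx2]
    rw [hx2, hx2']
    rw [show ((a:ℝ) + (Int.fract x + 1) / 2) = ((a:ℤ):ℝ) + (Int.fract x + 1) / 2 by norm_num,
      Int.fract_intCast_add, Int.fract_intCast_add, f1, f2]
    have hpow : (-1 : ℝ) ^ ⌊x⌋ = -1 := Odd.neg_one_zpow ⟨a, ha⟩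
    rw [hpow, eulerPoly_eq_bernoulli]
    ring

open Complex in
lemma hasSum_fourier_eulerFun (m : ℕ) (hm : 1 ≤ m) (x : ℝ) :
    HasSum (fun n : ℤ =>
      Complex.exp ((2 * (n : ℂ) + 1) * (Real.pi : ℂ) * Complex.I * (x : ℂ)) /
          ((2 * (n : ℂ) + 1) * (Real.pi : ℂ) * Complex.I) ^ (m + 1))
      ((eulerFun m x : ℂ) / (2 * m.factorial)) := by
  have pi_ne : (Real.pi : ℂ) ≠ 0 := Complex.ofReal_ne_zero.mpr Real.pi_ne_zero
  have key : ∀ y : ℝ, HasSum (fun n : ℤ => 1/(n:ℂ)^(m+1) * Complex.exp (2*(Real.pi:ℂ)*I*n*y))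
      (-(2*(Real.pi:ℂ)*I)^(m+1)/(m+1).factorial * bernoulliFun (m+1) (Int.fract y)) := by
    intro y
    have h := hasSum_one_div_pow_mul_fourier_mul_bernoulliFun (k := m+1) (by omega)
      (x := Int.fract y) ⟨Int.fract_nonneg y, (Int.fract_lt_one y).le⟩
    have hterm : ∀ n : ℤ, (1/(n:ℂ)^(m+1) * Complex.exp (2*(Real.pi:ℂ)*I*n*y))
        = 1/(n:ℂ)^(m+1) * fourier n ((Int.fract y : ℝ) : UnitAddCircle) := by
      intro n
      congr 1
      rw [fourier_coe_apply]
      have hr : y = Int.fract y + (⌊y⌋ : ℝ) := (Int.fract_add_floor y).symm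
      have hy : (y:ℂ) = ((Int.fract y : ℝ) : ℂ) + ((⌊y⌋ : ℤ) : ℂ) := by
        rw [← Complex.ofReal_intCast, ← Complex.ofReal_add, ← hr]
      have harg : 2*(Real.pi:ℂ)*I*n*y
          = 2*(Real.pi:ℂ)*I*n*((Int.fract y : ℝ):ℂ)/((1:ℝ):ℂ) + (n*⌊y⌋ : ℤ) * (2*(Real.pi:ℂ)*I) := by
        rw [hy]; push_cast; ring
      rw [harg, Complex.exp_add, Complex.exp_int_mul_two_pi_mul_I, mul_one]
    rw [funext hterm]
    exact h
  have hsF : HasSum (fun n : ℤ => 1/(n:ℂ)^(m+1) * Complex.exp (2*(Real.pi:ℂ)*I*n*((x+1)/2 : ℝ))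
        - 1/(n:ℂ)^(m+1) * Complex.exp (2*(Real.pi:ℂ)*I*n*((x/2 : ℝ))))
      ((-(2*(Real.pi:ℂ)*I)^(m+1)/(m+1).factorial * bernoulliFun (m+1) (Int.fract ((x+1)/2)))
       - (-(2*(Real.pi:ℂ)*I)^(m+1)/(m+1).factorial * bernoulliFun (m+1) (Int.fract (x/2)))) :=
    (key ((x+1)/2)).sub (key (x/2))
  have hginj : Function.Injective (fun j : ℤ => 2*j+1) := by
    intro a b h
    simp only at h
    omega
  have hvanish : ∀ n ∉ Set.range (fun j : ℤ => 2*j+1),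
      (1/(n:ℂ)^(m+1) * Complex.exp (2*(Real.pi:ℂ)*I*n*((x+1)/2 : ℝ))
        - 1/(n:ℂ)^(m+1) * Complex.exp (2*(Real.pi:ℂ)*I*n*((x/2 : ℝ)))) = 0 := by
    intro n hn
    obtain ⟨a, rfl⟩ : ∃ a : ℤ, n = 2*a := by
      rcases Int.even_or_odd n with ⟨a, ha⟩ | ⟨a, ha⟩
      · exact ⟨a, by omega⟩
      · exact absurd ⟨a, show 2*a+1 = n by omega⟩ hn
    have harg : 2*(Real.pi:ℂ)*I*((2*a : ℤ):ℂ)*(((x+1)/2 : ℝ):ℂ)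
        = 2*(Real.pi:ℂ)*I*((2*a : ℤ):ℂ)*((x/2 : ℝ):ℂ) + (a:ℤ) * (2*(Real.pi:ℂ)*I) := by
      push_cast; ring
    rw [harg, Complex.exp_add, Complex.exp_int_mul_two_pi_mul_I, mul_one, sub_self]
  have hFg : HasSum (fun j : ℤ => 1/((2*j+1 : ℤ):ℂ)^(m+1)
        * Complex.exp (2*(Real.pi:ℂ)*I*((2*j+1 : ℤ):ℂ)*((x+1)/2 : ℝ))
        - 1/((2*j+1 : ℤ):ℂ)^(m+1) * Complex.exp (2*(Real.pi:ℂ)*I*((2*j+1 : ℤ):ℂ)*((x/2 : ℝ))))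
      ((-(2*(Real.pi:ℂ)*I)^(m+1)/(m+1).factorial * bernoulliFun (m+1) (Int.fract ((x+1)/2)))
       - (-(2*(Real.pi:ℂ)*I)^(m+1)/(m+1).factorial * bernoulliFun (m+1) (Int.fract (x/2)))) :=
    (Function.Injective.hasSum_iff hginj hvanish).mpr hsF
  have hmul := hFg.mul_right (-(1:ℂ)/(2*((Real.pi:ℂ)*I)^(m+1)))
  have hptwise : (fun j : ℤ => (1/((2*j+1 : ℤ):ℂ)^(m+1)
        * Complex.exp (2*(Real.pi:ℂ)*I*((2*j+1 : ℤ):ℂ)*((x+1)/2 : ℝ))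
        - 1/((2*j+1 : ℤ):ℂ)^(m+1) * Complex.exp (2*(Real.pi:ℂ)*I*((2*j+1 : ℤ):ℂ)*((x/2 : ℝ))))
        * (-(1:ℂ)/(2*((Real.pi:ℂ)*I)^(m+1))))
      = fun j : ℤ => Complex.exp ((2 * (j : ℂ) + 1) * (Real.pi : ℂ) * Complex.I * (x : ℂ)) /
          ((2 * (j : ℂ) + 1) * (Real.pi : ℂ) * Complex.I) ^ (m + 1) := by
    funext j
    have hne : (2*(j:ℂ)+1) ≠ 0 := by
      intro h
      have h2 : ((2*j+1 : ℤ) : ℂ) = 0 := by push_cast; linear_combination h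
      rw [Int.cast_eq_zero] at h2
      omega
    have hexp1 : Complex.exp (2*(Real.pi:ℂ)*I*((2*j+1 : ℤ):ℂ)*(((x+1)/2 : ℝ):ℂ))
        = - Complex.exp ((2 * (j : ℂ) + 1) * (Real.pi : ℂ) * Complex.I * (x : ℂ)) := by
      have harg : 2*(Real.pi:ℂ)*I*((2*j+1 : ℤ):ℂ)*(((x+1)/2 : ℝ):ℂ)
          = ((2 * (j : ℂ) + 1) * (Real.pi : ℂ) * Complex.I * (x : ℂ)
            + (Real.pi:ℂ)*I) + (j:ℤ) * (2*(Real.pi:ℂ)*I) := by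
        push_cast; ring
      rw [harg, Complex.exp_add, Complex.exp_int_mul_two_pi_mul_I, mul_one, Complex.exp_add,
        Complex.exp_pi_mul_I]
      ring
    have hexp2 : Complex.exp (2*(Real.pi:ℂ)*I*((2*j+1 : ℤ):ℂ)*((x/2 : ℝ):ℂ))
        = Complex.exp ((2 * (j : ℂ) + 1) * (Real.pi : ℂ) * Complex.I * (x : ℂ)) := by
      congr 1
      push_cast; ring
    have hcast : (((2*j+1 : ℤ)):ℂ) = 2*(j:ℂ)+1 := by push_cast; ring
    rw [hexp1, hexp2, hcast]
    have hpow : ((2 * (j : ℂ) + 1) * (Real.pi : ℂ) * Complex.I) ^ (m + 1)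
        = (2*(j:ℂ)+1)^(m+1) * ((Real.pi:ℂ) * Complex.I)^(m+1) := by
      rw [← mul_pow, mul_assoc]
    rw [hpow]
    have hne2 : ((2*(j:ℂ)+1))^(m+1) ≠ 0 := pow_ne_zero _ hne
    have hne3 : ((Real.pi:ℂ) * Complex.I)^(m+1) ≠ 0 :=
      pow_ne_zero _ (mul_ne_zero pi_ne Complex.I_ne_zero)
    field_simp
    ring
  rw [hptwise] at hmul
  convert hmul using 1
  · rfl
  rw [eulerFun_eq_bernoulli m x]
  have hfac : ((m+1).factorial : ℂ) = (m+1) * (m.factorial : ℂ) := by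
    rw [Nat.factorial_succ]; push_cast; ring
  have hfne : ((m.factorial : ℕ) : ℂ) ≠ 0 := Nat.cast_ne_zero.mpr (Nat.factorial_ne_zero m)
  have hm1 : ((m:ℂ)+1) ≠ 0 := by
    intro h
    have : ((m+1 : ℕ) : ℂ) = 0 := by push_cast; linear_combination h
    rw [Nat.cast_eq_zero] at this
    omega
  have h2pow : (2*(Real.pi:ℂ)*I)^(m+1) = 2^(m+1) * ((Real.pi:ℂ)*I)^(m+1) := by
    rw [mul_assoc, mul_pow]
  push_cast
  rw [hfac, h2pow]
  have hpi : ((Real.pi:ℂ)*I)^(m+1) ≠ 0 := pow_ne_zero _ (mul_ne_zero pi_ne Complex.I_ne_zero)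
  field_simp
  ring

/-- Fourier expansion of the Euler function: for `m ≥ 1` and real `x`,
`Ē_m(x) = 2·m!·∑_{n ∈ ℤ} e^{(2n+1)πix} / ((2n+1)πi)^{m+1}`, the series converging
absolutely. -/
theorem eulerFun_fourier (m : ℕ) (hm : 1 ≤ m) (x : ℝ) :
    Summable (fun n : ℤ =>
      ‖Complex.exp ((2 * (n : ℂ) + 1) * (Real.pi : ℂ) * Complex.I * (x : ℂ)) /
          ((2 * (n : ℂ) + 1) * (Real.pi : ℂ) * Complex.I) ^ (m + 1)‖) ∧
    (eulerFun m x : ℂ) =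
      2 * (m.factorial : ℂ) *
        ∑' n : ℤ,
          Complex.exp ((2 * (n : ℂ) + 1) * (Real.pi : ℂ) * Complex.I * (x : ℂ)) /
            ((2 * (n : ℂ) + 1) * (Real.pi : ℂ) * Complex.I) ^ (m + 1) := by
  have H := hasSum_fourier_eulerFun m hm x
  constructor
  · exact summable_norm_iff.mpr H.summable
  · rw [H.tsum_eq]
    have hfne : (m.factorial : ℂ) ≠ 0 := Nat.cast_ne_zero.mpr (Nat.factorial_ne_zero m)
    field_simp
end
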